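/- Let α be an irrational number whose partial quotients satisfy a_1(α) = a_2(α) = ⋯ = a_k(α) = 1, and suppose α ∈ DC_{γ,τ}, i.e. |α − n/m| ≥ γ/m^{2+τ} for all rationals. Then the Bruno-type sum B(α) = Σ_{ℓ≥0} log a_{ℓ+1}(α)/m_ℓ(α) satisfies B(α) < Σ_{ℓ≥k} ( log(γ^{−1}) φ^{ℓ−1} + 2τ φ^{(ℓ−1)/2} ), where φ = (√5−1)/2; in particular B(α) is finite. -/

import Mathlib

/-- The Gauss-map iterates for the continued fraction expansion of `α`. -/
noncomputable def cfXi (α : ℝ) : ℕ → ℝ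
  | 0 => Int.fract α
  | k + 1 => Int.fract (cfXi α k)⁻¹

/-- The partial quotients of the continued fraction expansion of `α`. -/
noncomputable def cfA (α : ℝ) : ℕ → ℤ
  | 0 => ⌊α⌋
  | k + 1 => ⌊(cfXi α k)⁻¹⌋

/-- Denominators `m_k` of the convergents: `m_0 = 1`, `m_1 = a_1`,
`m_{k+2} = a_{k+2} m_{k+1} + m_k`. -/
noncomputable def cfM (α : ℝ) : ℕ → ℤ
  | 0 => 1
  | 1 => cfA α 1
  | k + 2 => cfA α (k + 2) * cfM α (k + 1) + cfM α k

/-- Numerators `n_k` of the convergents: `n_0 = a_0`, `n_1 = a_1 a_0 + 1`,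
`n_{k+2} = a_{k+2} n_{k+1} + n_k`. -/
noncomputable def cfN (α : ℝ) : ℕ → ℤ
  | 0 => cfA α 0
  | 1 => cfA α 1 * cfA α 0 + 1
  | k + 2 => cfA α (k + 2) * cfN α (k + 1) + cfN α k


namespace BrunoAux

open Real Finset

variable {α : ℝ}

lemma xi_prop (hα : Irrational α) :
    ∀ ℓ, Irrational (cfXi α ℓ) ∧ 0 < cfXi α ℓ ∧ cfXi α ℓ < 1 := by
  intro ℓ
  induction ℓ with
  | zero =>
      have h1 : Irrational (Int.fract α) := by rw [Int.fract]; exact Irrational.sub_intCast hα _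
      exact ⟨h1, Int.fract_pos.mpr fun hx => (hα.ne_int ⌊α⌋) hx, Int.fract_lt_one _⟩
  | succ n ih =>
      have h1 : Irrational (cfXi α n)⁻¹ := ih.1.inv
      have h2 : Irrational (cfXi α (n+1)) := by
        show Irrational (Int.fract _)
        rw [Int.fract]; exact Irrational.sub_intCast h1 _
      refine ⟨h2, Int.fract_pos.mpr fun hx => (h1.ne_int _) hx, Int.fract_lt_one _⟩

/-- key identity : `x_ℓ * (a_{ℓ+1} + x_{ℓ+1}) = 1` -/
lemma key (hα : Irrational α) (ℓ : ℕ) :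
    cfXi α ℓ * ((cfA α (ℓ+1) : ℝ) + cfXi α (ℓ+1)) = 1 := by
  have hx := (xi_prop hα ℓ).2.1
  have h1 : cfXi α (ℓ+1) = (cfXi α ℓ)⁻¹ - (⌊(cfXi α ℓ)⁻¹⌋ : ℝ) := by
    show Int.fract _ = _; rw [Int.fract]
  have h2 : (cfA α (ℓ+1) : ℝ) = (⌊(cfXi α ℓ)⁻¹⌋ : ℝ) := by norm_cast
  rw [h1, h2]
  field_simp
  ring

lemma a_ge_one (hα : Irrational α) (ℓ : ℕ) : 1 ≤ cfA α (ℓ+1) := by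
  have hx := (xi_prop hα ℓ)
  have h : (1:ℝ) < (cfXi α ℓ)⁻¹ := (one_lt_inv₀ hx.2.1).mpr hx.2.2
  show 1 ≤ ⌊(cfXi α ℓ)⁻¹⌋
  exact Int.le_floor.mpr (by exact_mod_cast h.le)

lemma m_ge_one_and_mono (hα : Irrational α) :
    ∀ ℓ, 1 ≤ cfM α ℓ ∧ cfM α ℓ ≤ cfM α (ℓ+1) := by
  intro ℓ
  induction ℓ with
  | zero =>
      refine ⟨le_refl _, ?_⟩
      show (1:ℤ) ≤ cfA α 1
      exact a_ge_one hα 0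
  | succ n ih =>
      have ha := a_ge_one hα (n+1)
      constructor
      · exact le_trans ih.1 ih.2
      · show cfM α (n+1) ≤ cfA α (n+2) * cfM α (n+1) + cfM α n
        nlinarith [ih.1, ih.2]

lemma m_ge_one (hα : Irrational α) (ℓ : ℕ) : 1 ≤ cfM α ℓ := (m_ge_one_and_mono hα ℓ).1

lemma am_le_m (hα : Irrational α) (ℓ : ℕ) :
    cfA α (ℓ+1) * cfM α ℓ ≤ cfM α (ℓ+1) := by
  cases ℓ with
  | zero =>
      show cfA α 1 * 1 ≤ cfA α 1
      omega
  | succ n =>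
      show cfA α (n+2) * cfM α (n+1) ≤ cfA α (n+2) * cfM α (n+1) + cfM α n
      have := m_ge_one hα n; omega

/-- the product `p_ℓ = x_0 ⋯ x_ℓ` -/
noncomputable def cfP (α : ℝ) (ℓ : ℕ) : ℝ := ∏ i ∈ Finset.range (ℓ+1), cfXi α i

lemma cfP_succ (ℓ : ℕ) : cfP α (ℓ+1) = cfP α ℓ * cfXi α (ℓ+1) :=
  Finset.prod_range_succ _ _

lemma cfP_zero : cfP α 0 = cfXi α 0 := by simp [cfP]

lemma cfP_pos (hα : Irrational α) (ℓ : ℕ) : 0 < cfP α ℓ :=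
  Finset.prod_pos fun i _ => (xi_prop hα i).2.1

lemma cfM_two_step (n : ℕ) : (cfM α (n+2) : ℝ)
    = (cfA α (n+2) : ℝ) * (cfM α (n+1) : ℝ) + (cfM α n : ℝ) := by
  rw [show cfM α (n+2) = cfA α (n+2) * cfM α (n+1) + cfM α n from rfl]; push_cast; ring

/-- identity (1): `m_ℓ α − n_ℓ = (−1)^ℓ p_ℓ` -/
lemma identity1 (hα : Irrational α) :
    ∀ ℓ, (cfM α ℓ : ℝ) * α - (cfN α ℓ : ℝ) = (-1)^ℓ * cfP α ℓ ∧
      (cfM α (ℓ+1) : ℝ) * α - (cfN α (ℓ+1) : ℝ) = (-1)^(ℓ+1) * cfP α (ℓ+1) := by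
  have hx0 : cfXi α 0 = α - (cfA α 0 : ℝ) := by
    show Int.fract α = α - ((⌊α⌋:ℤ):ℝ); rw [Int.fract]
  have h0 : (cfM α 0 : ℝ) * α - (cfN α 0 : ℝ) = (-1)^0 * cfP α 0 := by
    show ((1:ℤ):ℝ) * α - (cfA α 0 : ℝ) = (-1)^0 * cfP α 0
    rw [cfP_zero, hx0]; ring
  have h1 : (cfM α 1 : ℝ) * α - (cfN α 1 : ℝ) = (-1)^1 * cfP α 1 := by
    have hkey := key hα 0
    have hp1 : cfP α 1 = cfXi α 0 * cfXi α 1 := by rw [cfP_succ, cfP_zero]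
    show ((cfA α 1 : ℤ):ℝ) * α - ((cfA α 1 * cfA α 0 + 1 : ℤ):ℝ) = (-1)^1 * cfP α 1
    rw [hp1]
    push_cast
    linear_combination hkey - (cfA α 1 : ℝ) * hx0
  intro ℓ
  induction ℓ with
  | zero => exact ⟨h0, h1⟩
  | succ n ih =>
      refine ⟨ih.2, ?_⟩
      have hkey := key hα (n+1)
      norm_num at hkey
      have hp1 := cfP_succ (α := α) n
      have hp2 := cfP_succ (α := α) (n+1)
      norm_num at hp2
      have hN : (cfN α (n+2) : ℝ) = (cfA α (n+2) : ℝ) * (cfN α (n+1) : ℝ) + (cfN α n : ℝ) := by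
        rw [show cfN α (n+2) = cfA α (n+2) * cfN α (n+1) + cfN α n from rfl]; push_cast; ring
      have e2 : (cfM α (n+2):ℝ) * α - (cfN α (n+2):ℝ)
          = (cfA α (n+2):ℝ) * ((cfM α (n+1):ℝ)*α - (cfN α (n+1):ℝ))
            + ((cfM α n:ℝ)*α - (cfN α n:ℝ)) := by rw [cfM_two_step, hN]; ring
      show (cfM α (n+2):ℝ) * α - (cfN α (n+2):ℝ) = (-1)^(n+2) * cfP α (n+2)
      rw [e2, ih.1, ih.2, hp2, hp1]
      have hsgn : ((-1:ℝ))^(n+2) = (-1)^n := by ring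
      have hsgn1 : ((-1:ℝ))^(n+1) = -(-1)^n := by ring
      rw [hsgn, hsgn1]
      linear_combination (-(-1:ℝ)^n * cfP α n) * hkey
  
/-- identity (2): `m_{ℓ+1} p_ℓ + m_ℓ p_{ℓ+1} = 1` -/
lemma identity2 (hα : Irrational α) :
    ∀ ℓ, (cfM α (ℓ+1) : ℝ) * cfP α ℓ + (cfM α ℓ : ℝ) * cfP α (ℓ+1) = 1 := by
  intro ℓ
  induction ℓ with
  | zero =>
      have hkey := key hα 0
      have hp1 : cfP α 1 = cfXi α 0 * cfXi α 1 := by rw [cfP_succ, cfP_zero]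
      show ((cfA α 1 : ℤ) : ℝ) * cfP α 0 + ((1:ℤ) : ℝ) * cfP α 1 = 1
      rw [hp1, cfP_zero]
      push_cast
      linear_combination hkey
  | succ n ih =>
      have hkey := key hα (n+1)
      norm_num at hkey
      have hp1 := cfP_succ (α := α) n
      have hp2 := cfP_succ (α := α) (n+1)
      norm_num at hp2
      rw [cfM_two_step, hp2, hp1]
      rw [hp1] at ih
      linear_combination ih + ((cfM α (n+1):ℝ) * cfP α n) * hkey

/-- growth: `Φ^ℓ ≤ Φ · m_ℓ` where `Φ = (1+√5)/2` (nat powers). -/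
lemma m_growth (hα : Irrational α) :
    ∀ ℓ : ℕ, ((1 + Real.sqrt 5)/2) ^ ℓ ≤ ((1 + Real.sqrt 5)/2) * (cfM α ℓ : ℝ) ∧
      ((1 + Real.sqrt 5)/2) ^ (ℓ+1) ≤ ((1 + Real.sqrt 5)/2) * (cfM α (ℓ+1) : ℝ) := by
  set Φ : ℝ := (1 + Real.sqrt 5)/2 with hΦdef
  have h5 : Real.sqrt 5 ^ 2 = 5 := Real.sq_sqrt (by norm_num)
  have hΦ1 : 1 < Φ := by
    rw [hΦdef]; nlinarith [Real.sqrt_nonneg 5]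
  have hΦ0 : 0 < Φ := lt_trans one_pos hΦ1
  have hΦsq : Φ ^ 2 = Φ + 1 := by rw [hΦdef]; nlinarith
  intro ℓ
  induction ℓ with
  | zero =>
      constructor
      · show Φ ^ 0 ≤ Φ * ((1:ℤ):ℝ)
        push_cast; simpa using hΦ1.le
      · show Φ ^ 1 ≤ Φ * ((cfA α 1 : ℤ):ℝ)
        have : (1:ℝ) ≤ ((cfA α 1 : ℤ):ℝ) := by exact_mod_cast a_ge_one hα 0
        nlinarith
  | succ n ih =>
      refine ⟨ih.2, ?_⟩
      have h1 : (1:ℝ) ≤ (cfM α (n+1) : ℝ) := by exact_mod_cast m_ge_one hα (n+1)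
      have h0 : (1:ℝ) ≤ (cfM α n : ℝ) := by exact_mod_cast m_ge_one hα n
      have ha : (1:ℝ) ≤ (cfA α (n+2) : ℝ) := by exact_mod_cast a_ge_one hα (n+1)
      have hsum : (cfM α (n+1) : ℝ) + (cfM α n : ℝ) ≤ (cfM α (n+2) : ℝ) := by
        rw [cfM_two_step]; nlinarith
      have hstep : Φ ^ (n+2) = Φ ^ (n+1) + Φ ^ n := by
        have : Φ ^ (n+2) = Φ ^ n * Φ ^ 2 := by ring
        rw [this, hΦsq]; ring
      calc Φ ^ (n+1+1) = Φ ^ (n+1) + Φ ^ n := hstep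
        _ ≤ Φ * (cfM α (n+1) : ℝ) + Φ * (cfM α n : ℝ) := by linarith [ih.1, ih.2]
        _ = Φ * ((cfM α (n+1) : ℝ) + (cfM α n : ℝ)) := by ring
        _ ≤ Φ * (cfM α (n+2) : ℝ) := by nlinarith

end BrunoAux

namespace BrunoAux

open Real

lemma sqrt5_sq : Real.sqrt 5 ^ 2 = 5 := Real.sq_sqrt (by norm_num)

lemma phi_pos : 0 < (Real.sqrt 5 - 1)/2 := by
  nlinarith [sqrt5_sq, Real.sqrt_nonneg 5]

lemma phi_lt_one : (Real.sqrt 5 - 1)/2 < 1 := by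
  nlinarith [sqrt5_sq, Real.sqrt_nonneg 5]

lemma phi_mul_Phi : (Real.sqrt 5 - 1)/2 * ((1 + Real.sqrt 5)/2) = 1 := by
  nlinarith [sqrt5_sq]

/-- `1/m_ℓ ≤ φ^{ℓ-1}` -/
lemma inv_m_le {α : ℝ} (hα : Irrational α) (ℓ : ℕ) :
    1/(cfM α ℓ : ℝ) ≤ ((Real.sqrt 5 - 1)/2) ^ ((ℓ:ℝ)-1) := by
  have hφ0 : 0 < (Real.sqrt 5 - 1)/2 := phi_pos
  have hΦ0 : (0:ℝ) < (1 + Real.sqrt 5)/2 := by positivity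
  have hm0 : (0:ℝ) < (cfM α ℓ : ℝ) := by exact_mod_cast lt_of_lt_of_le one_pos (m_ge_one hα ℓ)
  have hgrow := (m_growth hα ℓ).1
  have hrepr : ((Real.sqrt 5 - 1)/2) ^ ((ℓ:ℝ)-1)
      = ((1 + Real.sqrt 5)/2) / ((1 + Real.sqrt 5)/2) ^ ℓ := by
    rw [show (ℓ:ℝ)-1 = (ℓ:ℝ) + (-1) by ring, Real.rpow_add hφ0, Real.rpow_neg_one,
      Real.rpow_natCast]
    rw [show (Real.sqrt 5 - 1)/2 = ((1 + Real.sqrt 5)/2)⁻¹ by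
      field_simp; nlinarith [sqrt5_sq]]
    rw [inv_pow, inv_inv]
    field_simp
  rw [hrepr, div_le_div_iff₀ hm0 (by positivity)]
  nlinarith [hgrow]

/-- `1/√m_ℓ ≤ φ^{(ℓ-1)/2}` -/
lemma inv_sqrt_m_le {α : ℝ} (hα : Irrational α) (ℓ : ℕ) :
    1/Real.sqrt (cfM α ℓ : ℝ) ≤ ((Real.sqrt 5 - 1)/2) ^ (((ℓ:ℝ)-1)/2) := by
  have hφ0 : 0 < (Real.sqrt 5 - 1)/2 := phi_pos
  have hm0 : (0:ℝ) < (cfM α ℓ : ℝ) := by exact_mod_cast lt_of_lt_of_le one_pos (m_ge_one hα ℓ)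
  have h := inv_m_le hα ℓ
  calc 1/Real.sqrt (cfM α ℓ : ℝ) = Real.sqrt (1/(cfM α ℓ : ℝ)) := by
        rw [one_div, one_div, Real.sqrt_inv]
    _ ≤ Real.sqrt (((Real.sqrt 5 - 1)/2) ^ ((ℓ:ℝ)-1)) := Real.sqrt_le_sqrt h
    _ = ((Real.sqrt 5 - 1)/2) ^ (((ℓ:ℝ)-1)/2) := by
        rw [Real.sqrt_eq_rpow, ← Real.rpow_mul hφ0.le]
        ring_nf

end BrunoAux

namespace BrunoAux
open Real

lemma log_div_le_two_div_sqrt {m : ℝ} (hm : 1 ≤ m) : Real.log m / m ≤ 2 / Real.sqrt m := by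
  have hm0 : (0:ℝ) < m := lt_of_lt_of_le one_pos hm
  have hs0 : 0 < Real.sqrt m := Real.sqrt_pos.mpr hm0
  have h1 : Real.log m = 2 * Real.log (Real.sqrt m) := by
    rw [Real.log_sqrt hm0.le]; ring
  have h2 : Real.log (Real.sqrt m) ≤ Real.sqrt m - 1 := Real.log_le_sub_one_of_pos hs0
  have h3 : Real.sqrt m * Real.sqrt m = m := Real.mul_self_sqrt hm0.le
  rw [h1, div_le_div_iff₀ hm0 hs0]
  nlinarith

/-- The main per-term bound. -/
lemma term_bound {α : ℝ} (hα : Irrational α) {γ τ : ℝ} (hγ : 0 < γ) (hτ : 0 ≤ τ)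
    (hγ1 : γ < 1)
    (hDC : ∀ (n : ℤ) (m : ℕ), 1 ≤ m → γ / (m : ℝ) ^ (2 + τ) ≤ |α - (n : ℝ) / (m : ℝ)|)
    (ℓ : ℕ) :
    Real.log (cfA α (ℓ+1) : ℝ) / (cfM α ℓ : ℝ) <
      Real.log γ⁻¹ * ((Real.sqrt 5 - 1)/2) ^ ((ℓ:ℝ)-1)
        + 2 * τ * ((Real.sqrt 5 - 1)/2) ^ (((ℓ:ℝ)-1)/2) := by
  set m : ℝ := (cfM α ℓ : ℝ) with hmdef
  have hm1 : (1:ℝ) ≤ m := by rw [hmdef]; exact_mod_cast m_ge_one hα ℓ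
  have hm0 : (0:ℝ) < m := lt_of_lt_of_le one_pos hm1
  have ha1 : (1:ℝ) ≤ (cfA α (ℓ+1) : ℝ) := by exact_mod_cast a_ge_one hα ℓ
  have ha0 : (0:ℝ) < (cfA α (ℓ+1) : ℝ) := lt_of_lt_of_le one_pos ha1
  have hp0 : 0 < cfP α ℓ := cfP_pos hα ℓ
  -- the Diophantine lower bound on p
  have hM1 : 1 ≤ (cfM α ℓ).toNat := by
    have := m_ge_one hα ℓ; omega
  have hMeq : (((cfM α ℓ).toNat : ℕ) : ℝ) = m := by
    rw [hmdef]
    exact_mod_cast congrArg (Int.cast : ℤ → ℝ) (Int.toNat_of_nonneg (by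
      have := m_ge_one hα ℓ; omega))
  have habs : |α - (cfN α ℓ : ℝ) / m| = cfP α ℓ / m := by
    have hid := (identity1 hα ℓ).1
    have : α - (cfN α ℓ : ℝ) / m = ((-1)^ℓ * cfP α ℓ) / m := by
      rw [← hid]; field_simp; ring
    rw [this, abs_div, abs_mul, abs_pow, abs_neg, abs_one, one_pow, one_mul,
      abs_of_pos hp0, abs_of_pos hm0]
  have hDCl := hDC (cfN α ℓ) (cfM α ℓ).toNat hM1
  rw [hMeq, habs] at hDCl
  -- γ / m^(1+τ) ≤ p
  have hsplit : m ^ ((2:ℝ) + τ) = m ^ ((1:ℝ)+τ) * m := by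
    rw [show (2:ℝ)+τ = ((1:ℝ)+τ)+1 by ring, Real.rpow_add hm0, Real.rpow_one]
  have h2 : γ / m ^ ((1:ℝ)+τ) ≤ cfP α ℓ := by
    have h := hDCl
    rw [hsplit, ← div_div] at h
    calc γ / m ^ ((1:ℝ)+τ) = (γ / m ^ ((1:ℝ)+τ) / m) * m := by field_simp
      _ ≤ (cfP α ℓ / m) * m := mul_le_mul_of_nonneg_right h hm0.le
      _ = cfP α ℓ := by field_simp
  have hmτ0 : 0 < m ^ τ := Real.rpow_pos_of_pos hm0 τ
  have h4 : γ / m ^ τ ≤ m * cfP α ℓ := by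
    have hsplit2 : m ^ ((1:ℝ)+τ) = m ^ τ * m := by
      rw [add_comm, Real.rpow_add hm0, Real.rpow_one]
    rw [hsplit2, ← div_div] at h2
    calc γ / m ^ τ = (γ / m ^ τ / m) * m := by field_simp
      _ ≤ cfP α ℓ * m := mul_le_mul_of_nonneg_right h2 hm0.le
      _ = m * cfP α ℓ := by ring
  have h5 : (cfA α (ℓ+1) : ℝ) * (m * cfP α ℓ) < 1 := by
    have hineq : (cfA α (ℓ+1) : ℝ) * m ≤ ((cfM α (ℓ+1) : ℤ) : ℝ) := by
      rw [hmdef]; exact_mod_cast am_le_m hα ℓ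
    have hid2 := identity2 hα ℓ
    have hp1 : 0 < cfP α (ℓ+1) := cfP_pos hα (ℓ+1)
    nlinarith [hp0, hm1]
  have h6 : (cfA α (ℓ+1) : ℝ) * (γ / m ^ τ) < 1 :=
    lt_of_le_of_lt (mul_le_mul_of_nonneg_left h4 ha0.le) h5
  have h7 : (cfA α (ℓ+1) : ℝ) < m ^ τ / γ := by
    rw [lt_div_iff₀ hγ]
    rw [← mul_div_assoc] at h6
    exact (div_lt_one hmτ0).mp h6
  have hlog : Real.log (cfA α (ℓ+1):ℝ) < τ * Real.log m + Real.log γ⁻¹ := by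
    have h := Real.log_lt_log ha0 h7
    rw [Real.log_div (ne_of_gt hmτ0) (ne_of_gt hγ), Real.log_rpow hm0] at h
    rw [Real.log_inv]
    linarith
  have hloggam : 0 < Real.log γ⁻¹ := Real.log_pos ((one_lt_inv₀ hγ).mpr hγ1)
  have hs0 : 0 < Real.sqrt m := Real.sqrt_pos.mpr hm0
  calc Real.log (cfA α (ℓ+1):ℝ) / m < (τ * Real.log m + Real.log γ⁻¹) / m := by
        rw [div_lt_div_iff₀ hm0 hm0]
        nlinarith [hlog, hm0]
    _ = τ * (Real.log m / m) + Real.log γ⁻¹ * (1/m) := by ring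
    _ ≤ τ * (2 / Real.sqrt m) + Real.log γ⁻¹ * (((Real.sqrt 5 - 1)/2) ^ ((ℓ:ℝ)-1)) :=
        add_le_add (mul_le_mul_of_nonneg_left (log_div_le_two_div_sqrt hm1) hτ)
          (mul_le_mul_of_nonneg_left (inv_m_le hα ℓ) hloggam.le)
    _ ≤ 2 * τ * (((Real.sqrt 5 - 1)/2) ^ (((ℓ:ℝ)-1)/2))
          + Real.log γ⁻¹ * (((Real.sqrt 5 - 1)/2) ^ ((ℓ:ℝ)-1)) := by
        have hb3 := inv_sqrt_m_le hα ℓ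
        have e : τ * (2/Real.sqrt m) = (2*τ) * (1/Real.sqrt m) := by ring
        rw [e]
        exact add_le_add_left (mul_le_mul_of_nonneg_left hb3 (by positivity)) _
    _ = Real.log γ⁻¹ * ((Real.sqrt 5 - 1)/2) ^ ((ℓ:ℝ)-1)
          + 2 * τ * ((Real.sqrt 5 - 1)/2) ^ (((ℓ:ℝ)-1)/2) := by ring

end BrunoAux

namespace BrunoAux
open Real

lemma G_summable (c d : ℝ) :
    Summable (fun ℓ : ℕ => c * ((Real.sqrt 5 - 1)/2) ^ ((ℓ:ℝ)-1)
      + d * ((Real.sqrt 5 - 1)/2) ^ (((ℓ:ℝ)-1)/2)) := by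
  have hφ0 := phi_pos
  have hφ1 := phi_lt_one
  set s : ℝ := ((Real.sqrt 5 - 1)/2) ^ ((1:ℝ)/2) with hsdef
  have hs0 : 0 < s := Real.rpow_pos_of_pos hφ0 _
  have hs1 : s < 1 := Real.rpow_lt_one hφ0.le hφ1 (by norm_num)
  have hrepr : ∀ ℓ:ℕ, (c * ((Real.sqrt 5 - 1)/2)⁻¹) * ((Real.sqrt 5 - 1)/2)^ℓ
        + (d * s⁻¹) * s^ℓ
      = c * ((Real.sqrt 5 - 1)/2) ^ ((ℓ:ℝ)-1) + d * ((Real.sqrt 5 - 1)/2) ^ (((ℓ:ℝ)-1)/2) := by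
    intro ℓ
    have e1 : ((Real.sqrt 5 - 1)/2) ^ ((ℓ:ℝ)-1)
        = ((Real.sqrt 5 - 1)/2)^ℓ * ((Real.sqrt 5 - 1)/2)⁻¹ := by
      rw [show (ℓ:ℝ)-1 = (ℓ:ℝ)+(-1) by ring, Real.rpow_add hφ0, Real.rpow_neg_one,
        Real.rpow_natCast]
    have e2 : ((Real.sqrt 5 - 1)/2) ^ (((ℓ:ℝ)-1)/2) = s^ℓ * s⁻¹ := by
      rw [show ((ℓ:ℝ)-1)/2 = (1/2)*((ℓ:ℝ)+(-1)) by ring, Real.rpow_mul hφ0.le, ← hsdef,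
        Real.rpow_add hs0, Real.rpow_neg_one, Real.rpow_natCast]
    rw [e1, e2]; ring
  exact (((summable_geometric_of_lt_one hφ0.le hφ1).mul_left _).add
    ((summable_geometric_of_lt_one hs0.le hs1).mul_left _)).congr hrepr

end BrunoAux


open Real in
/-- If the partial quotients of an irrational `α` satisfy `a_1 = ⋯ = a_k = 1` and `α` is
`(γ,τ)`-Diophantine, then the Bruno-type sum `B(α) = Σ_{ℓ≥0} log a_{ℓ+1}(α)/m_ℓ(α)` converges
and is bounded by `Σ_{ℓ≥k} ( log(γ⁻¹) φ^{ℓ−1} + 2τ φ^{(ℓ−1)/2} )`, with `φ = (√5−1)/2`. -/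
theorem bruno_sum_bound (α : ℝ) (hα : Irrational α) (γ τ : ℝ) (hγ : 0 < γ) (hτ : 0 ≤ τ)
    (k : ℕ) (hk : 1 ≤ k)
    (hones : ∀ ℓ : ℕ, 1 ≤ ℓ → ℓ ≤ k → cfA α ℓ = 1)
    (hDC : ∀ (n : ℤ) (m : ℕ), 1 ≤ m → γ / (m : ℝ) ^ (2 + τ) ≤ |α - (n : ℝ) / (m : ℝ)|) :
    Summable (fun ℓ : ℕ => Real.log (cfA α (ℓ + 1) : ℝ) / (cfM α ℓ : ℝ)) ∧
    (∑' ℓ : ℕ, Real.log (cfA α (ℓ + 1) : ℝ) / (cfM α ℓ : ℝ)) <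
      ∑' j : ℕ, (Real.log γ⁻¹ * ((Real.sqrt 5 - 1) / 2) ^ (((k + j : ℕ) : ℝ) - 1)
        + 2 * τ * ((Real.sqrt 5 - 1) / 2) ^ ((((k + j : ℕ) : ℝ) - 1) / 2)) := by
  have hγ1 : γ < 1 := by
    have h := hDC ⌊α⌋ 1 le_rfl
    rw [Nat.cast_one, Real.one_rpow, div_one, div_one] at h
    have hfr : |α - (⌊α⌋:ℝ)| < 1 := by
      rw [abs_of_nonneg (by linarith [Int.floor_le α])]
      have := Int.fract_lt_one α
      rw [Int.fract] at this
      linarith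
    linarith
  set f := fun ℓ : ℕ => Real.log (cfA α (ℓ + 1) : ℝ) / (cfM α ℓ : ℝ) with hf
  have hstrict : ∀ ℓ : ℕ, f ℓ <
      Real.log γ⁻¹ * ((Real.sqrt 5 - 1)/2) ^ ((ℓ:ℝ)-1)
        + 2 * τ * ((Real.sqrt 5 - 1)/2) ^ (((ℓ:ℝ)-1)/2) :=
    fun ℓ => BrunoAux.term_bound hα hγ hτ hγ1 hDC ℓ
  have hf0 : ∀ ℓ, 0 ≤ f ℓ := by
    intro ℓ
    apply div_nonneg
    · exact Real.log_nonneg (by exact_mod_cast BrunoAux.a_ge_one hα ℓ)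
    · have : (1:ℝ) ≤ (cfM α ℓ : ℝ) := by exact_mod_cast BrunoAux.m_ge_one hα ℓ
      linarith
  have hGsum := BrunoAux.G_summable (Real.log γ⁻¹) (2*τ)
  have hfsum : Summable f :=
    Summable.of_nonneg_of_le hf0 (fun ℓ => (hstrict ℓ).le) hGsum
  refine ⟨hfsum, ?_⟩
  have hinj : Function.Injective (fun j : ℕ => k + j) := fun a b h => by
    simpa using h
  have hshift : Summable (fun j : ℕ =>
      Real.log γ⁻¹ * ((Real.sqrt 5 - 1)/2) ^ (((k+j:ℕ):ℝ)-1)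
        + 2 * τ * ((Real.sqrt 5 - 1)/2) ^ ((((k+j:ℕ):ℝ)-1)/2)) :=
    (hGsum.comp_injective hinj).congr (fun j => rfl)
  have hzero : ∀ i ∈ Finset.range k, f i = 0 := by
    intro i hi
    have hi' := Finset.mem_range.mp hi
    have ha : cfA α (i+1) = 1 := hones (i+1) (by omega) (by omega)
    simp [hf, ha]
  have hsum_eq : ∑' ℓ, f ℓ = ∑' i, f (i + k) := by
    have h := hfsum.sum_add_tsum_nat_add k
    rw [Finset.sum_eq_zero hzero, zero_add] at h
    exact h.symm
  rw [hsum_eq]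
  refine Summable.tsum_lt_tsum (i := 0) ?_ ?_ ((summable_nat_add_iff k).mpr hfsum) hshift
  · intro i
    simpa [Nat.add_comm k i] using (hstrict (i+k)).le
  · simpa using hstrict k
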